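/- arXiv:1406.6015 — 2 statements merged into one kernel-verified Lean document; each statement's English description precedes it below -/
import Mathlib

section
/- Let A be a binary m×n matrix and v, v' distinct vertices of the set covering polyhedron Q*(A) = conv{x ∈ ℤⁿ : Ax ≥ 1, x ≥ 0}. Suppose there exist d, d' ∈ ℝⁿ with 0 ≤ d ≤ v, 0 ≨ d', v·d' = 0, such that x = v − d + d' and x' = v' − d' + d both belong to Q*(A), x is binary, and x ≠ v'. Then v and v' are not adjacent in Q*(A). -/
open Finset

/-- Support of a vector. -/
def supp {n : ℕ} (x : Fin n → ℝ) : Set (Fin n) := {j | x j ≠ 0}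

/-- Support of the `t`-th row of a matrix. -/
def rowSupp {m n : ℕ} (A : Matrix (Fin m) (Fin n) ℝ) (t : Fin m) : Set (Fin n) :=
  {j | A t j ≠ 0}

def IsBinaryMatrix {m n : ℕ} (A : Matrix (Fin m) (Fin n) ℝ) : Prop :=
  ∀ t j, A t j = 0 ∨ A t j = 1

def IsBinaryVec {n : ℕ} (x : Fin n → ℝ) : Prop := ∀ j, x j = 0 ∨ x j = 1

/-- The polyhedron `{x | A x ≥ b, x ≥ 0}`. -/
def polyP {m n : ℕ} (A : Matrix (Fin m) (Fin n) ℝ) (b : Fin m → ℝ) : Set (Fin n → ℝ) :=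
  {x | (∀ i, b i ≤ ∑ j, A i j * x j) ∧ ∀ j, 0 ≤ x j}

/-- The linear relaxation `Q(A) = {x | A x ≥ 1, x ≥ 0}`. -/
def polyQ {m n : ℕ} (A : Matrix (Fin m) (Fin n) ℝ) : Set (Fin n → ℝ) :=
  {x | (∀ i, 1 ≤ ∑ j, A i j * x j) ∧ ∀ j, 0 ≤ x j}

/-- The set covering polyhedron `Q*(A)`: convex hull of nonnegative integer solutions of
`A x ≥ 1`. -/
def Qstar {m n : ℕ} (A : Matrix (Fin m) (Fin n) ℝ) : Set (Fin n → ℝ) :=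
  convexHull ℝ {x | (∀ j, ∃ k : ℕ, x j = k) ∧ ∀ i, 1 ≤ ∑ j, A i j * x j}

/-- A vertex of a convex set is an extreme point. -/
def IsVertex {n : ℕ} (S : Set (Fin n → ℝ)) (v : Fin n → ℝ) : Prop :=
  v ∈ S.extremePoints ℝ

/-- Two distinct vertices are adjacent when they lie on a common edge, i.e. the segment
joining them is a face (extreme subset) of `S`. -/
def AdjacentVerts {n : ℕ} (S : Set (Fin n → ℝ)) (v w : Fin n → ℝ) : Prop :=
  v ≠ w ∧ IsVertex S v ∧ IsVertex S w ∧ IsExtreme ℝ S (segment ℝ v w)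

/-- There is a row support `C` with `C ∩ supp v = {p}` and `C ∩ supp v' = {p'}`. -/
def jsgEdge {m n : ℕ} (A : Matrix (Fin m) (Fin n) ℝ) (v v' : Fin n → ℝ)
    (p p' : Fin n) : Prop :=
  ∃ t, rowSupp A t ∩ supp v = {p} ∧ rowSupp A t ∩ supp v' = {p'}

/-- The joint saturation graph of `v` and `v'` with respect to `A`. -/
def JSG {m n : ℕ} (A : Matrix (Fin m) (Fin n) ℝ) (v v' : Fin n → ℝ) :
    SimpleGraph (Fin n) where
  Adj p p' := p ≠ p' ∧ (jsgEdge A v v' p p' ∨ jsgEdge A v v' p' p)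
  symm := by constructor; intro p p' h; exact ⟨h.1.symm, h.2.symm⟩
  loopless := by constructor; intro p h; exact h.1 rfl

/-- The node set of the joint saturation graph: the symmetric difference of the supports. -/
def jsgNodes {n : ℕ} (v v' : Fin n → ℝ) : Set (Fin n) :=
  (supp v \ supp v') ∪ (supp v' \ supp v)

def JSGConnected {m n : ℕ} (A : Matrix (Fin m) (Fin n) ℝ) (v v' : Fin n → ℝ) : Prop :=
  ∀ p ∈ jsgNodes v v', ∀ q ∈ jsgNodes v v', (JSG A v v').Reachable p q

/-- One of the two partite sets is contained in a single connected component. -/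
def JSGPartiteConnected {m n : ℕ} (A : Matrix (Fin m) (Fin n) ℝ) (v v' : Fin n → ℝ) : Prop :=
  (∀ p ∈ supp v \ supp v', ∀ q ∈ supp v \ supp v', (JSG A v v').Reachable p q) ∨
  (∀ p ∈ supp v' \ supp v, ∀ q ∈ supp v' \ supp v, (JSG A v v').Reachable p q)

/-- Exactly two components, one of which is an isolated node. -/
def JSGAlmostConnected {m n : ℕ} (A : Matrix (Fin m) (Fin n) ℝ) (v v' : Fin n → ℝ) : Prop :=
  ∃ q ∈ jsgNodes v v', (∀ p, ¬ (JSG A v v').Adj q p) ∧ (jsgNodes v v' \ {q}).Nonempty ∧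
    ∀ p ∈ jsgNodes v v' \ {q}, ∀ r ∈ jsgNodes v v' \ {q}, (JSG A v v').Reachable p r

/-- The (directed) circular arc from `i` to `j` in `Fin n`. -/
def arc {n : ℕ} [NeZero n] (i j : Fin n) : Set (Fin n) :=
  {k | ∃ h : ℕ, h ≤ ((j - i : Fin n) : ℕ) ∧ k = i + (Fin.ofNat n h : Fin n)}

/-- A matrix is row circular if each row support is a circular arc. -/
def RowCircular {m n : ℕ} [NeZero n] (A : Matrix (Fin m) (Fin n) ℝ) : Prop :=
  ∀ t, ∃ i j : Fin n, rowSupp A t = arc i j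

/-- The standard assumptions: binary, no dominating rows, between 2 and n-1 ones per row,
no all-zero or all-one column. -/
def StandardAssumptions {m n : ℕ} (A : Matrix (Fin m) (Fin n) ℝ) : Prop :=
  IsBinaryMatrix A ∧
  (∀ s t : Fin m, s ≠ t → ¬ rowSupp A s ⊆ rowSupp A t) ∧
  (∀ t, 2 ≤ (rowSupp A t).ncard ∧ (rowSupp A t).ncard ≤ n - 1) ∧
  (∀ j : Fin n, (∃ t, A t j ≠ 0) ∧ (∃ t, A t j = 0))

/-- `a` and `b` occur consecutively (in either order) in the list `l`. -/
def ListConsec {α : Type*} (l : List α) (a b : α) : Prop :=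
  ∃ k : ℕ, (l[k]? = some a ∧ l[k+1]? = some b) ∨ (l[k]? = some b ∧ l[k+1]? = some a)

/-- `a` and `b` occur cyclically consecutively (in either order) in the list `l`. -/
def CycConsec {α : Type*} (l : List α) (a b : α) : Prop :=
  ∃ k : ℕ, k < l.length ∧
    ((l[k]? = some a ∧ l[(k+1) % l.length]? = some b) ∨
     (l[k]? = some b ∧ l[(k+1) % l.length]? = some a))

/-- The set `S` induces a path (possibly a single node) in `G`. -/
def IsPathOn {n : ℕ} (G : SimpleGraph (Fin n)) (S : Set (Fin n)) : Prop :=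
  ∃ l : List (Fin n), l.Nodup ∧ (∀ x, x ∈ S ↔ x ∈ l) ∧
    (∀ a b, a ∈ S → G.Adj a b → ListConsec l a b) ∧
    (∀ a b, ListConsec l a b → G.Adj a b)

/-- The set `S` induces a cycle in `G`. -/
def IsCycleOn {n : ℕ} (G : SimpleGraph (Fin n)) (S : Set (Fin n)) : Prop :=
  ∃ l : List (Fin n), 3 ≤ l.length ∧ l.Nodup ∧ (∀ x, x ∈ S ↔ x ∈ l) ∧
    (∀ a b, a ∈ S → G.Adj a b → CycConsec l a b) ∧
    (∀ a b, CycConsec l a b → G.Adj a b)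

/-- `p` and `q` are cyclically consecutive elements of `S`. -/
def CyclConsecIn {n : ℕ} [NeZero n] (S : Set (Fin n)) (p q : Fin n) : Prop :=
  p ≠ q ∧ p ∈ S ∧ q ∈ S ∧ (arc p q ∩ S = {p, q} ∨ arc q p ∩ S = {p, q})

/-- The circulant matrix `C(n,2)` with row supports `{t, t+1}` (mod n). -/
def Cn2 (n : ℕ) [NeZero n] : Matrix (Fin n) (Fin n) ℝ :=
  fun t j => if j = t ∨ j = t + 1 then 1 else 0

/-- Append a row to a matrix. -/
def appendRow {m n : ℕ} (A : Matrix (Fin m) (Fin n) ℝ) (a : Fin n → ℝ) :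
    Matrix (Fin (m+1)) (Fin n) ℝ :=
  fun t j => if h : (t : ℕ) < m then A ⟨t, h⟩ j else a j

/-- A set of points is integral if all its extreme points are integer vectors. -/
def IsIntegralSet {n : ℕ} (S : Set (Fin n → ℝ)) : Prop :=
  ∀ x ∈ S.extremePoints ℝ, ∀ j, ∃ z : ℤ, x j = z

/-- A binary matrix is minimally nonideal if `Q(A)` is not integral but both restrictions
`Q(A) ∩ {x_i = 0}` and `Q(A) ∩ {x_i = 1}` are integral for every coordinate `i`. -/
def MinimallyNonideal {m n : ℕ} (A : Matrix (Fin m) (Fin n) ℝ) : Prop :=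
  ¬ IsIntegralSet (polyQ A) ∧
  ∀ i : Fin n, IsIntegralSet (polyQ A ∩ {x | x i = 0}) ∧
               IsIntegralSet (polyQ A ∩ {x | x i = 1})

/-- The matrix of the degenerate projective plane with `t+1` points and lines. -/
def Jmat (t : ℕ) : Matrix (Fin (t+1)) (Fin (t+1)) ℝ :=
  fun i j => if i = 0 then (if j = 0 then 0 else 1) else (if j = 0 ∨ j = i then 1 else 0)

/-- `A` is isomorphic to some degenerate projective plane matrix `J_t`, `t ≥ 2`. -/
def IsoToDegenProjPlane {m n : ℕ} (A : Matrix (Fin m) (Fin n) ℝ) : Prop :=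
  ∃ t : ℕ, 2 ≤ t ∧ ∃ (σ : Fin m ≃ Fin (t+1)) (τ : Fin n ≃ Fin (t+1)),
    ∀ i j, A i j = Jmat t (σ i) (τ j)

/-- `A₁` is the core of `A`: a square nonsingular row submatrix with `r` ones per row and
per column, all other rows of `A` having more than `r` ones. -/
def IsCore {m n : ℕ} (A : Matrix (Fin m) (Fin n) ℝ) (A₁ : Matrix (Fin n) (Fin n) ℝ)
    (r : ℕ) : Prop :=
  2 ≤ r ∧ A₁.det ≠ 0 ∧
  (∃ f : Fin n → Fin m, Function.Injective f ∧ (∀ i, A₁ i = A (f i)) ∧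
    ∀ t, t ∉ Set.range f → r < (rowSupp A t).ncard) ∧
  (∀ i, (rowSupp A₁ i).ncard = r) ∧ (∀ j, {i | A₁ i j ≠ 0}.ncard = r)

/-- `B₁` is the core of the blocker of `A`: a square nonsingular matrix whose rows are
binary vertices of `Q*(A)` with `s` ones per row and per column, all other binary
vertices of `Q*(A)` having more than `s` ones. -/
def IsBlockerCore {m n : ℕ} (A : Matrix (Fin m) (Fin n) ℝ) (B₁ : Matrix (Fin n) (Fin n) ℝ)
    (s : ℕ) : Prop :=
  2 ≤ s ∧ B₁.det ≠ 0 ∧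
  (∀ i, IsBinaryVec (B₁ i) ∧ IsVertex (Qstar A) (B₁ i)) ∧
  Function.Injective (fun i => B₁ i) ∧
  (∀ i, (rowSupp B₁ i).ncard = s) ∧ (∀ j, {i | B₁ i j ≠ 0}.ncard = s) ∧
  (∀ x, IsBinaryVec x → IsVertex (Qstar A) x → (∀ i, x ≠ B₁ i) → s < (supp x).ncard)

/-- `w^i` for `n = 3ν`: the complement of the characteristic vector of the residue class
`i` mod 3. -/
def wVec (n : ℕ) (i : Fin 3) : Fin n → ℝ :=
  fun k => if (k : ℕ) % 3 = (i : ℕ) then 0 else 1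

/-- `a^i` for `n = 3ν`: the characteristic vector of the residue class `i` mod 3
(`a¹ = (1,0,0,1,0,0,…)` corresponds to `i = 0`). -/
def aVec (n : ℕ) (i : ℕ) : Fin n → ℝ :=
  fun k => if (k : ℕ) % 3 = i then 1 else 0

lemma vertex_mem_gen {m n : ℕ} {A : Matrix (Fin m) (Fin n) ℝ} {v : Fin n → ℝ}
    (hv : IsVertex (Qstar A) v) :
    v ∈ {x : Fin n → ℝ | (∀ j, ∃ k : ℕ, x j = k) ∧ ∀ i, 1 ≤ ∑ j, A i j * x j} := by
  have hv2 : v ∈ ((convexHull ℝ) {x : Fin n → ℝ | (∀ j, ∃ k : ℕ, x j = k) ∧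
      ∀ i, 1 ≤ ∑ j, A i j * x j}).extremePoints ℝ := hv
  exact extremePoints_convexHull_subset hv2

lemma vertex_isBinary {m n : ℕ} {A : Matrix (Fin m) (Fin n) ℝ} (hA : IsBinaryMatrix A)
    {v : Fin n → ℝ} (hv : IsVertex (Qstar A) v) : IsBinaryVec v := by
  obtain ⟨hnat, hrow⟩ : (∀ j, ∃ k : ℕ, v j = k) ∧ ∀ i, 1 ≤ ∑ j, A i j * v j := vertex_mem_gen hv
  have hA0 : ∀ i j, 0 ≤ A i j := fun i j => by rcases hA i j with h | h <;> simp [h]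
  set c : Fin n → ℝ := fun j => min (v j) 1 with hc
  set w : Fin n → ℝ := fun j => 2 * v j - min (v j) 1 with hw
  have hv0 : ∀ j, 0 ≤ v j := fun j => by
    obtain ⟨k, hk⟩ := hnat j; rw [hk]; positivity
  have hc0 : ∀ j, 0 ≤ c j := fun j => le_min (hv0 j) zero_le_one
  have hcS : c ∈ {x : Fin n → ℝ | (∀ j, ∃ k : ℕ, x j = k) ∧ ∀ i, 1 ≤ ∑ j, A i j * x j} := by
    constructor
    · intro j; obtain ⟨k, hk⟩ := hnat j
      exact ⟨min k 1, by simp [hc, hk, Nat.cast_min]⟩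
    · intro i
      have hj : ∃ j, A i j = 1 ∧ 1 ≤ v j := by
        by_contra hcon
        push_neg at hcon
        have : ∑ j, A i j * v j = 0 := by
          refine Finset.sum_eq_zero fun j _ => ?_
          rcases hA i j with h | h
          · simp [h]
          · obtain ⟨k, hk⟩ := hnat j
            have := hcon j h
            rw [hk] at this ⊢
            have : k = 0 := by exact_mod_cast Nat.lt_one_iff.mp (by exact_mod_cast this)
            simp [this]
        linarith [hrow i]
      obtain ⟨j, hj1, hj2⟩ := hj
      have h1 : A i j * c j = 1 := by simp [hj1, hc, min_eq_right hj2]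
      calc (1:ℝ) = A i j * c j := h1.symm
        _ ≤ ∑ j', A i j' * c j' :=
          Finset.single_le_sum (fun j' _ => mul_nonneg (hA0 i j') (hc0 j')) (mem_univ j)
  have hwS : w ∈ {x : Fin n → ℝ | (∀ j, ∃ k : ℕ, x j = k) ∧ ∀ i, 1 ≤ ∑ j, A i j * x j} := by
    constructor
    · intro j; obtain ⟨k, hk⟩ := hnat j
      refine ⟨2 * k - min k 1, ?_⟩
      have hle : min k 1 ≤ 2 * k := le_trans (min_le_left _ _) (by omega)
      simp only [hw, hk]
      push_cast [Nat.cast_sub hle, Nat.cast_min]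
      ring
    · intro i
      have : ∑ j, A i j * v j ≤ ∑ j, A i j * w j := by
        refine Finset.sum_le_sum fun j _ => ?_
        have : v j ≤ w j := by
          have := min_le_left (v j) 1; simp only [hw]; linarith
        exact mul_le_mul_of_nonneg_left this (hA0 i j)
      linarith [hrow i]
  have hcmem : c ∈ Qstar A := subset_convexHull ℝ _ hcS
  have hwmem : w ∈ Qstar A := subset_convexHull ℝ _ hwS
  have hv2 : v ∈ (Qstar A).extremePoints ℝ := hv
  have hcv : c = v := by
    refine ((mem_extremePoints.mp hv2).2 c hcmem w hwmem ?_).1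
    refine ⟨1/2, 1/2, by norm_num, by norm_num, by norm_num, ?_⟩
    funext j
    simp only [Pi.add_apply, Pi.smul_apply, smul_eq_mul, hc, hw]
    ring
  intro j
  obtain ⟨k, hk⟩ := hnat j
  have : v j ≤ 1 := by
    have := congrFun hcv j; simp only [hc] at this
    rw [← this]; exact min_le_right _ _
  rw [hk] at this ⊢
  have : k ≤ 1 := by exact_mod_cast this
  interval_cases k <;> simp

/-- the exchange argument showing non-adjacency in `Q*(A)`. -/
theorem stmt1 {m n : ℕ} (A : Matrix (Fin m) (Fin n) ℝ) (hA : IsBinaryMatrix A)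
    (v v' : Fin n → ℝ) (hne : v ≠ v')
    (hv : IsVertex (Qstar A) v) (hv' : IsVertex (Qstar A) v')
    (d d' : Fin n → ℝ)
    (hd0 : ∀ j, 0 ≤ d j) (hdv : ∀ j, d j ≤ v j)
    (hd'0 : ∀ j, 0 ≤ d' j) (hd'ne : d' ≠ 0)
    (hvd' : ∑ j, v j * d' j = 0)
    (hx : v - d + d' ∈ Qstar A) (hx' : v' - d' + d ∈ Qstar A)
    (hxbin : IsBinaryVec (v - d + d')) (hxne : v - d + d' ≠ v') :
    ¬ AdjacentVerts (Qstar A) v v' := by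
  rintro ⟨-, -, -, hF⟩
  set x : Fin n → ℝ := v - d + d' with hxdef
  set x' : Fin n → ℝ := v' - d' + d with hx'def
  -- the midpoint of v,v' equals the midpoint of x,x'
  have hmid_seg : (1/2 : ℝ) • v + (1/2 : ℝ) • v' ∈ segment ℝ v v' :=
    ⟨1/2, 1/2, by norm_num, by norm_num, by norm_num, rfl⟩
  have hmid_open : (1/2 : ℝ) • v + (1/2 : ℝ) • v' ∈ openSegment ℝ x x' := by
    refine ⟨1/2, 1/2, by norm_num, by norm_num, by norm_num, ?_⟩
    funext j
    simp only [hxdef, hx'def, Pi.add_apply, Pi.sub_apply, Pi.smul_apply, smul_eq_mul]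
    ring
  have hxF : x ∈ segment ℝ v v' := hF.2 hx hx' hmid_seg hmid_open
  obtain ⟨a, b, ha, hb, hab, hcomb⟩ := hxF
  -- a coordinate where d' is positive
  obtain ⟨j0, hj0⟩ : ∃ j, d' j ≠ 0 := Function.ne_iff.mp hd'ne
  have hd'pos : 0 < d' j0 := (hd'0 j0).lt_of_ne (Ne.symm hj0)
  -- v is nonnegative
  have hvmem : v ∈ {x : Fin n → ℝ | (∀ j, ∃ k : ℕ, x j = k) ∧
      ∀ i, 1 ≤ ∑ j, A i j * x j} := vertex_mem_gen hv
  have hv0 : ∀ j, 0 ≤ v j := fun j => by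
    obtain ⟨k, hk⟩ := hvmem.1 j; rw [hk]; positivity
  -- v j0 = 0
  have hvj0 : v j0 = 0 := by
    have hterm : v j0 * d' j0 = 0 := by
      have := (Finset.sum_eq_zero_iff_of_nonneg
        (fun j _ => mul_nonneg (hv0 j) (hd'0 j))).mp hvd' j0 (Finset.mem_univ j0)
      exact this
    rcases mul_eq_zero.mp hterm with h | h
    · exact h
    · exact absurd h hj0
  have hdj0 : d j0 = 0 := le_antisymm (hvj0 ▸ hdv j0) (hd0 j0)
  have hxj0 : x j0 = d' j0 := by
    simp [hxdef, hvj0, hdj0]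
  have hxj0one : x j0 = 1 := by
    rcases hxbin j0 with h | h
    · exact absurd (hxj0 ▸ h) (ne_of_gt hd'pos)
    · exact h
  -- v' is binary
  have hv'bin : IsBinaryVec v' := vertex_isBinary hA hv'
  -- b < 1
  have hb1 : b < 1 := by
    rcases lt_or_eq_of_le (by linarith : b ≤ 1) with h | h
    · exact h
    · exfalso
      apply hxne
      funext j
      have := congrFun hcomb j
      simp only [Pi.add_apply, Pi.smul_apply, smul_eq_mul] at this
      have ha0 : a = 0 := by linarith
      rw [ha0, h] at this
      simpa using this.symm
  have hcj0 := congrFun hcomb j0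
  simp only [Pi.add_apply, Pi.smul_apply, smul_eq_mul, hvj0, hxj0one, mul_zero] at hcj0
  rcases hv'bin j0 with h | h <;> rw [h] at hcj0 <;> linarith
end

section
/- Let A be a row circular binary matrix satisfying the standard assumptions and v, v' distinct vertices of Q*(A). If some connected component of the joint saturation graph G(v,v') is a cycle, then the node set of that cycle equals supp(v) ∪ supp(v'), so supp(v) ∩ supp(v') = ∅ and G(v,v') is connected. -/
open Finset

open Fin.NatCast

section Stmt7Aux

variable {m n : ℕ} [NeZero n]

/-- The minimal positive circular step from `q` into `T`. -/
noncomputable def deltaT (T : Set (Fin n)) (q : Fin n) : ℕ :=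
  sInf {d : ℕ | 0 < d ∧ q + (d : Fin n) ∈ T}

/-- The circular successor of `q` in `T`. -/
noncomputable def succT (T : Set (Fin n)) (q : Fin n) : Fin n :=
  q + ((deltaT T q : ℕ) : Fin n)

lemma deltaT_set_nonempty {T : Set (Fin n)} {q : Fin n} (hq : q ∈ T) :
    {d : ℕ | 0 < d ∧ q + (d : Fin n) ∈ T}.Nonempty :=
  ⟨n, Nat.pos_of_ne_zero (NeZero.ne n), by simp [Fin.natCast_self, hq]⟩

lemma deltaT_spec {T : Set (Fin n)} {q : Fin n} (hq : q ∈ T) :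
    0 < deltaT T q ∧ succT T q ∈ T := by
  have h := Nat.sInf_mem (deltaT_set_nonempty (T := T) hq)
  exact ⟨h.1, h.2⟩

lemma deltaT_le {T : Set (Fin n)} {q : Fin n} {d : ℕ} (hd : 0 < d)
    (hmem : q + (d : Fin n) ∈ T) : deltaT T q ≤ d := Nat.sInf_le ⟨hd, hmem⟩

lemma not_mem_of_lt_deltaT {T : Set (Fin n)} {q : Fin n} {d : ℕ} (hd : 0 < d)
    (hlt : d < deltaT T q) : q + (d : Fin n) ∉ T :=
  fun h => absurd (deltaT_le hd h) (not_le.mpr hlt)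

lemma deltaT_eq {T : Set (Fin n)} {q : Fin n} {d : ℕ} (hd : 0 < d)
    (hmem : q + (d : Fin n) ∈ T)
    (hmin : ∀ e, 0 < e → e < d → q + (e : Fin n) ∉ T) : deltaT T q = d := by
  have hne : {e : ℕ | 0 < e ∧ q + (e : Fin n) ∈ T}.Nonempty := ⟨d, hd, hmem⟩
  have hm := Nat.sInf_mem hne
  have hle : deltaT T q ≤ d := Nat.sInf_le ⟨hd, hmem⟩
  rcases lt_or_eq_of_le hle with h | h
  · exact absurd hm.2 (hmin _ hm.1 h)
  · exact h

lemma natCast_fin_inj {a b : ℕ} (ha : a < n) (hb : b < n)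
    (h : (a : Fin n) = (b : Fin n)) : a = b := by
  have h2 := congrArg Fin.val h
  rwa [Fin.val_natCast, Fin.val_natCast, Nat.mod_eq_of_lt ha, Nat.mod_eq_of_lt hb] at h2

lemma succT_inj {T : Set (Fin n)} {x y : Fin n} (hx : x ∈ T) (hy : y ∈ T)
    (h : succT T x = succT T y) : x = y := by
  by_contra hxy
  set e := ((y - x : Fin n) : ℕ) with he
  have hsub : (y - x : Fin n) ≠ 0 := sub_ne_zero.mpr (Ne.symm hxy)
  have hepos : 0 < e := by
    rcases Nat.eq_zero_or_pos e with h0 | h0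
    · exact absurd (Fin.ext (by rw [← he, h0]; simp)) hsub
    · exact h0
  have helt : e < n := (y - x).isLt
  have hyx : y = x + (e : Fin n) := by
    rw [he, Fin.cast_val_eq_self]; abel
  have hxe' : y + ((n - e : ℕ) : Fin n) = x := by
    rw [hyx, add_assoc, ← Nat.cast_add, show e + (n - e) = n from by omega,
      Fin.natCast_self, add_zero]
  rcases lt_trichotomy e (deltaT T x) with hlt | heq | hgt
  · exact not_mem_of_lt_deltaT hepos hlt (by rw [← hyx]; exact hy)
  · have hsx : succT T x = y := by rw [succT, ← heq, ← hyx]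
    have hsy : succT T y = y := by rw [← h, hsx]
    have hdy := deltaT_spec hy
    have hdyn : deltaT T y ≤ n := by
      refine deltaT_le (Nat.pos_of_ne_zero (NeZero.ne n)) ?_
      simpa [Fin.natCast_self] using hy
    have hcast0 : ((deltaT T y : ℕ) : Fin n) = 0 := by
      have h3 : y + ((deltaT T y : ℕ) : Fin n) = y + 0 := by
        rw [add_zero]; exact hsy
      exact add_left_cancel h3
    have hdyeq : deltaT T y = n := by
      have hmod : deltaT T y % n = 0 := by
        have h4 := congrArg Fin.val hcast0
        simpa [Fin.val_natCast] using h4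
      rcases Nat.lt_or_ge (deltaT T y) n with h5 | h5
      · rw [Nat.mod_eq_of_lt h5] at hmod; omega
      · omega
    refine not_mem_of_lt_deltaT (T := T) (q := y) (d := n - e) (by omega) (by omega) ?_
    rw [hxe']; exact hx
  · have hdx := deltaT_spec hx
    have h1 : deltaT T y ≤ n - e := by
      refine deltaT_le (by omega) ?_
      rw [hxe']; exact hx
    have h3 : y + (((n - e) + deltaT T x : ℕ) : Fin n) = x + ((deltaT T x : ℕ) : Fin n) := by
      rw [Nat.cast_add, ← add_assoc, hxe']
    have h4 : ((deltaT T y : ℕ) : Fin n) = (((n - e) + deltaT T x : ℕ) : Fin n) := by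
      apply add_left_cancel (a := y)
      rw [h3]
      exact h.symm
    have h5 : deltaT T y = (n - e) + deltaT T x := by
      refine natCast_fin_inj ?_ ?_ h4
      · omega
      · omega
    omega

end Stmt7Aux

section Stmt7Aux2

variable {m n : ℕ} [NeZero n]

lemma arc_succ_aux {A : Matrix (Fin m) (Fin n) ℝ} {U W : Set (Fin n)} {t : Fin m}
    {a b x y : Fin n} (harc : rowSupp A t = arc a b)
    (hU : rowSupp A t ∩ U = {x}) (hW : rowSupp A t ∩ W = {y})
    {hx hy : ℕ} (hyL : hy ≤ ((b - a : Fin n) : ℕ))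
    (hxe : x = a + (hx : Fin n)) (hye : y = a + (hy : Fin n)) (hlt : hx < hy) :
    succT (U ∪ W) x = y := by
  have hLn : ((b - a : Fin n) : ℕ) < n := (b - a).isLt
  have hmain : x + ((hy - hx : ℕ) : Fin n) = y := by
    rw [hxe, hye, add_assoc, ← Nat.cast_add, show hx + (hy - hx) = hy from by omega]
  have hd : 0 < hy - hx := by omega
  have hyT : y ∈ U ∪ W := by
    refine Or.inr ?_
    have h1 : y ∈ rowSupp A t ∩ W := by rw [hW]; exact Set.mem_singleton y
    exact h1.2
  have hmin : ∀ e, 0 < e → e < hy - hx → x + (e : Fin n) ∉ U ∪ W := by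
    intro e he hel hmem
    have hxen : x + (e : Fin n) = a + ((hx + e : ℕ) : Fin n) := by
      rw [hxe, add_assoc, ← Nat.cast_add]
    have hmemC : x + (e : Fin n) ∈ rowSupp A t := by
      rw [harc]; exact ⟨hx + e, by omega, hxen⟩
    cases hmem with
    | inl hmU =>
        have h1 : x + (e : Fin n) ∈ rowSupp A t ∩ U := ⟨hmemC, hmU⟩
        rw [hU, Set.mem_singleton_iff] at h1
        have h2 : ((hx + e : ℕ) : Fin n) = ((hx : ℕ) : Fin n) := by
          apply add_left_cancel (a := a)
          rw [← hxen, h1, hxe]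
        have h3 := natCast_fin_inj (by omega) (by omega) h2
        omega
    | inr hmW =>
        have h1 : x + (e : Fin n) ∈ rowSupp A t ∩ W := ⟨hmemC, hmW⟩
        rw [hW, Set.mem_singleton_iff] at h1
        have h2 : ((hx + e : ℕ) : Fin n) = ((hy : ℕ) : Fin n) := by
          apply add_left_cancel (a := a)
          rw [← hxen, h1, hye]
        have h3 := natCast_fin_inj (by omega) (by omega) h2
        omega
  show x + ((deltaT (U ∪ W) x : ℕ) : Fin n) = y
  rw [deltaT_eq hd (by rw [hmain]; exact hyT) hmin, hmain]

lemma arc_succ {A : Matrix (Fin m) (Fin n) ℝ} (hcirc : RowCircular A)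
    {U W : Set (Fin n)} {t : Fin m} {x y : Fin n}
    (hU : rowSupp A t ∩ U = {x}) (hW : rowSupp A t ∩ W = {y}) (hxy : x ≠ y) :
    succT (U ∪ W) x = y ∨ succT (U ∪ W) y = x := by
  obtain ⟨a, b, harc⟩ := hcirc t
  have hxC : x ∈ rowSupp A t := by
    have h1 : x ∈ rowSupp A t ∩ U := by rw [hU]; exact Set.mem_singleton x
    exact h1.1
  have hyC : y ∈ rowSupp A t := by
    have h1 : y ∈ rowSupp A t ∩ W := by rw [hW]; exact Set.mem_singleton y
    exact h1.1
  rw [harc] at hxC hyC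
  obtain ⟨hx, hxL, hxe⟩ := hxC
  obtain ⟨hy, hyL, hye⟩ := hyC
  have hne : hx ≠ hy := by
    intro h; exact hxy (by rw [hxe, hye, h])
  rcases lt_or_gt_of_ne hne with h | h
  · exact Or.inl (arc_succ_aux harc hU hW hyL hxe hye h)
  · right
    have h1 := arc_succ_aux harc hW hU hxL hye hxe h
    rwa [Set.union_comm] at h1

lemma adj_succT {A : Matrix (Fin m) (Fin n) ℝ} (hcirc : RowCircular A)
    {v v' : Fin n → ℝ} {q r : Fin n} (h : (JSG A v v').Adj q r) :
    q ∈ supp v ∪ supp v' ∧ r ∈ supp v ∪ supp v' ∧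
      (succT (supp v ∪ supp v') q = r ∨ succT (supp v ∪ supp v') r = q) := by
  obtain ⟨hne, hor⟩ := h
  rcases hor with ⟨t, h1, h2⟩ | ⟨t, h1, h2⟩
  · have hq : q ∈ rowSupp A t ∩ supp v := by rw [h1]; exact Set.mem_singleton q
    have hr : r ∈ rowSupp A t ∩ supp v' := by rw [h2]; exact Set.mem_singleton r
    exact ⟨Or.inl hq.2, Or.inr hr.2, arc_succ hcirc h1 h2 hne⟩
  · have hr : r ∈ rowSupp A t ∩ supp v := by rw [h1]; exact Set.mem_singleton r
    have hq : q ∈ rowSupp A t ∩ supp v' := by rw [h2]; exact Set.mem_singleton q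
    exact ⟨Or.inr hq.2, Or.inl hr.2, (arc_succ hcirc h1 h2 hne.symm).symm⟩

lemma adj_not_both {A : Matrix (Fin m) (Fin n) ℝ} {v v' : Fin n → ℝ} {j r : Fin n}
    (h : (JSG A v v').Adj j r) (hjv : j ∈ supp v) (hjv' : j ∈ supp v') : False := by
  obtain ⟨hne, hor⟩ := h
  rcases hor with ⟨t, h1, h2⟩ | ⟨t, h1, h2⟩
  · have hj : j ∈ rowSupp A t ∩ supp v := by rw [h1]; exact Set.mem_singleton j
    have hj2 : j ∈ rowSupp A t ∩ supp v' := ⟨hj.1, hjv'⟩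
    rw [h2, Set.mem_singleton_iff] at hj2
    exact hne hj2
  · have hj : j ∈ rowSupp A t ∩ supp v' := by rw [h2]; exact Set.mem_singleton j
    have hj2 : j ∈ rowSupp A t ∩ supp v := ⟨hj.1, hjv⟩
    rw [h1, Set.mem_singleton_iff] at hj2
    exact hne hj2

lemma orbit_subset {T S : Set (Fin n)} (hST : S ⊆ T)
    (hcl : ∀ q ∈ S, succT T q ∈ S) {p : Fin n} (hp : p ∈ S) : T ⊆ S := by
  classical
  have main : ∀ e : ℕ, p + (e : Fin n) ∈ T → p + (e : Fin n) ∈ S := by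
    intro e
    induction e using Nat.strong_induction_on with
    | _ e ih =>
      intro heT
      rcases Nat.eq_zero_or_pos e with rfl | hepos
      · simpa using hp
      · set P : ℕ → Prop := fun f => p + (f : Fin n) ∈ T with hP
        have hP0 : P 0 := by simpa [hP] using hST hp
        set f₀ := Nat.findGreatest P (e - 1) with hf₀
        have hPf₀ : P f₀ := Nat.findGreatest_spec (Nat.zero_le _) hP0
        have hf₀lt : f₀ < e := lt_of_le_of_lt (Nat.findGreatest_le _) (by omega)
        have hf₀S : p + (f₀ : Fin n) ∈ S := ih f₀ hf₀lt hPf₀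
        have hmem : (p + (f₀ : Fin n)) + ((e - f₀ : ℕ) : Fin n) = p + (e : Fin n) := by
          rw [add_assoc, ← Nat.cast_add, show f₀ + (e - f₀) = e from by omega]
        have hmin : ∀ d, 0 < d → d < e - f₀ → (p + (f₀ : Fin n)) + (d : Fin n) ∉ T := by
          intro d hd hdl hdT
          have hPd : P (f₀ + d) := by
            show p + ((f₀ + d : ℕ) : Fin n) ∈ T
            rw [Nat.cast_add, ← add_assoc]; exact hdT
          exact Nat.findGreatest_is_greatest (n := e - 1) (by omega) (by omega) hPd
        have hsucc : succT T (p + (f₀ : Fin n)) = p + (e : Fin n) := by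
          show _ + ((deltaT T (p + (f₀ : Fin n)) : ℕ) : Fin n) = _
          rw [deltaT_eq (by omega) (by rw [hmem]; exact heT) hmin, hmem]
        exact hsucc ▸ hcl _ hf₀S
  intro x hx
  have hx' : x = p + (((x - p : Fin n) : ℕ) : Fin n) := by
    rw [Fin.cast_val_eq_self]; abel
  rw [hx'] at hx ⊢
  exact main _ hx

lemma cycle_two_neighbors {G : SimpleGraph (Fin n)} {S : Set (Fin n)}
    (h : IsCycleOn G S) {q : Fin n} (hq : q ∈ S) :
    ∃ b c, b ≠ c ∧ G.Adj q b ∧ G.Adj q c := by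
  obtain ⟨l, hlen, hnd, hmem, _, hcc⟩ := h
  have hql : q ∈ l := (hmem q).1 hq
  obtain ⟨k, hk, hkq⟩ := List.getElem_of_mem hql
  have hlpos : 0 < l.length := by omega
  set i₁ := (k + 1) % l.length with hi₁def
  set i₂ := (k + (l.length - 1)) % l.length with hi₂def
  have hi₁ : i₁ < l.length := Nat.mod_lt _ hlpos
  have hi₂ : i₂ < l.length := Nat.mod_lt _ hlpos
  have hkey : (i₂ + 1) % l.length = k := by
    rw [hi₂def, Nat.mod_add_mod, show k + (l.length - 1) + 1 = k + l.length from by omega,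
      Nat.add_mod_right, Nat.mod_eq_of_lt hk]
  refine ⟨l[i₁], l[i₂], ?_, ?_, ?_⟩
  · intro hbc
    have hii : i₁ = i₂ := by
      have hinj := List.nodup_iff_injective_get.mp hnd
      have := hinj (a₁ := ⟨i₁, hi₁⟩) (a₂ := ⟨i₂, hi₂⟩) (by
        simp only [List.get_eq_getElem]
        exact hbc)
      exact congrArg Fin.val this
    have h2 : (k + 2) % l.length = k % l.length := by
      have h3 := congrArg (fun i => (i + 1) % l.length) hii
      simp only [hi₁def] at h3
      rw [Nat.mod_add_mod] at h3
      rw [show k + 1 + 1 = k + 2 from rfl] at h3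
      rw [hkey] at h3
      rw [h3, Nat.mod_eq_of_lt hk]
    have h4 : l.length ∣ 2 := by
      have h5 : k ≡ k + 2 [MOD l.length] := h2.symm
      have h6 := (Nat.modEq_iff_dvd' (by omega)).mp h5
      simpa using h6
    have := Nat.le_of_dvd (by norm_num) h4
    omega
  · refine hcc _ _ ⟨k, hk, Or.inl ⟨?_, ?_⟩⟩
    · rw [List.getElem?_eq_getElem hk, hkq]
    · rw [List.getElem?_eq_getElem hi₁]
  · refine hcc _ _ ⟨i₂, hi₂, Or.inr ⟨?_, ?_⟩⟩
    · rw [List.getElem?_eq_getElem hi₂]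
    · rw [hkey, List.getElem?_eq_getElem hk, hkq]

end Stmt7Aux2

/-- for row circular `A`, a cycle component of the joint saturation graph
exhausts `supp v ∪ supp v'`; in particular the supports are disjoint and the graph is
connected. -/
theorem stmt7 {m n : ℕ} [NeZero n] (A : Matrix (Fin m) (Fin n) ℝ)
    (hstd : StandardAssumptions A) (hcirc : RowCircular A)
    (v v' : Fin n → ℝ) (hne : v ≠ v')
    (hv : IsVertex (Qstar A) v) (hv' : IsVertex (Qstar A) v') :
    ∀ p ∈ jsgNodes v v',
      IsCycleOn (JSG A v v') {q | (JSG A v v').Reachable p q} →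
        {q | (JSG A v v').Reachable p q} = supp v ∪ supp v' ∧
        supp v ∩ supp v' = ∅ ∧ JSGConnected A v v' := by
  classical
  intro p hp hcyc
  set G := JSG A v v' with hG
  set S := {q | G.Reachable p q} with hSdef
  set T := supp v ∪ supp v' with hTdef
  have hpS : p ∈ S := SimpleGraph.Reachable.refl p
  have hadjS : ∀ q ∈ S, ∀ r, G.Adj q r → r ∈ S := fun q hq r hqr =>
    SimpleGraph.Reachable.trans hq hqr.reachable
  have hnbr : ∀ q ∈ S, ∃ b c, b ≠ c ∧ G.Adj q b ∧ G.Adj q c := fun q hq =>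
    cycle_two_neighbors hcyc hq
  have hST : S ⊆ T := by
    intro q hq
    obtain ⟨b, c, _, hqb, _⟩ := hnbr q hq
    exact (adj_succT hcirc hqb).1
  have hclose : ∀ q ∈ S, succT T q ∈ S := by
    intro q hq
    obtain ⟨b, c, hbc, hqb, hqc⟩ := hnbr q hq
    have hb := adj_succT hcirc hqb
    have hc := adj_succT hcirc hqc
    rcases hb.2.2 with h1 | h1
    · rw [hTdef, h1]; exact hadjS q hq b hqb
    · rcases hc.2.2 with h2 | h2
      · rw [hTdef, h2]; exact hadjS q hq c hqc
      · exact absurd (succT_inj hb.2.1 hc.2.1 (h1.trans h2.symm)) hbc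
  have hTS : T ⊆ S := orbit_subset hST hclose hpS
  have hSeT : S = T := Set.Subset.antisymm hST hTS
  refine ⟨hSeT, ?_, ?_⟩
  · apply Set.eq_empty_iff_forall_notMem.mpr
    rintro j ⟨hj1, hj2⟩
    have hjS : j ∈ S := hTS (Or.inl hj1)
    obtain ⟨b, c, _, hjb, _⟩ := hnbr j hjS
    exact adj_not_both hjb hj1 hj2
  · intro x hx y hy
    have hxS : x ∈ S := hTS (by rcases hx with h | h; exacts [Or.inl h.1, Or.inr h.1])
    have hyS : y ∈ S := hTS (by rcases hy with h | h; exacts [Or.inl h.1, Or.inr h.1])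
    exact SimpleGraph.Reachable.trans (SimpleGraph.Reachable.symm hxS) hyS
end
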